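/- Let A be a Banach algebra, B a Banach A-bimodule, and D : A → B* a continuous derivation. If the weak left topological center Z̃ˡ_{A**}(B**) equals all of B** (i.e., for every b'' ∈ B** the map a'' ↦ b''·a'' from A** to B** is weak*-to-weak continuous), then the second adjoint D'' : A** → B*** is a continuous derivation with respect to the first Arens product on A** and the induced A**-bimodule structure on B***. -/

import Mathlib

namespace NormedSpace

/-- The topological dual of a seminormed space `E` (as `NormedSpace.Dual` in the older Mathlib). -/
abbrev Dual (𝕜 : Type*) [NontriviallyNormedField 𝕜] (E : Type*) [SeminormedAddCommGroup E]
    [NormedSpace 𝕜 E] : Type _ := E →L[𝕜] 𝕜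

noncomputable instance (𝕜 : Type*) [NontriviallyNormedField 𝕜] (E : Type*) [SeminormedAddCommGroup E]
    [NormedSpace 𝕜 E] : NormedSpace 𝕜 (Dual 𝕜 E) := inferInstance

noncomputable instance (𝕜 : Type*) [NontriviallyNormedField 𝕜] (E : Type*) [SeminormedAddCommGroup E]
    [NormedSpace 𝕜 E] : SeminormedAddCommGroup (Dual 𝕜 E) := inferInstance

end NormedSpace

open NormedSpace ContinuousLinearMap

noncomputable section

section Core

variable (X Y Z : Type*)
  [NormedAddCommGroup X] [NormedSpace ℝ X]
  [NormedAddCommGroup Y] [NormedSpace ℝ Y]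
  [NormedAddCommGroup Z] [NormedSpace ℝ Z]

/-- The dual (adjoint) map of a continuous linear map. -/
def dualMapCLM (T : X →L[ℝ] Y) : Dual ℝ Y →L[ℝ] Dual ℝ X :=
  (ContinuousLinearMap.compSL X Y ℝ (RingHom.id ℝ) (RingHom.id ℝ)).flip T

variable {X Y Z}

/-- The adjoint of a continuous bilinear map `m : X × Y → Z`, as a bilinear map
`Z* × X → Y*`, `⟨adjBil m z' x, y⟩ = ⟨z', m x y⟩`. -/
def adjBil (m : X →L[ℝ] Y →L[ℝ] Z) : Dual ℝ Z →L[ℝ] X →L[ℝ] Dual ℝ Y :=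
  ((ContinuousLinearMap.compSL X (Y →L[ℝ] Z) (Dual ℝ Y) (RingHom.id ℝ) (RingHom.id ℝ)).flip m).comp
    (ContinuousLinearMap.compSL Y Z ℝ (RingHom.id ℝ) (RingHom.id ℝ))

/-- The first Arens extension of a continuous bilinear map `X × Y → Z`
to the biduals, `X** × Y** → Z**`. -/
def arensExt (m : X →L[ℝ] Y →L[ℝ] Z) :
    Dual ℝ (Dual ℝ X) →L[ℝ] Dual ℝ (Dual ℝ Y) →L[ℝ] Dual ℝ (Dual ℝ Z) :=
  adjBil (adjBil (adjBil m))

variable (E : Type*) [NormedAddCommGroup E] [NormedSpace ℝ E]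

/-- The weak-* topology on the bidual `E**`, i.e. the topology of pointwise
convergence on `E*`. -/
def weakStarTop : TopologicalSpace (Dual ℝ (Dual ℝ E)) :=
  ⨅ f : Dual ℝ E, TopologicalSpace.induced (fun F => F f) inferInstance

/-- The weak topology on the bidual `E**`, i.e. the topology of pointwise
convergence on `E***`. -/
def weakTop : TopologicalSpace (Dual ℝ (Dual ℝ E)) :=
  ⨅ Φ : Dual ℝ (Dual ℝ (Dual ℝ E)), TopologicalSpace.induced (fun F => Φ F) inferInstance

end Core

section Algebra

variable (A : Type*) [NonUnitalNormedRing A] [NormedSpace ℝ A]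
  [IsScalarTower ℝ A A] [SMulCommClass ℝ A A]

/-- The first Arens product on the bidual of a Banach algebra. -/
def arens1 : Dual ℝ (Dual ℝ A) →L[ℝ] Dual ℝ (Dual ℝ A) →L[ℝ] Dual ℝ (Dual ℝ A) :=
  arensExt (ContinuousLinearMap.mul ℝ A)

/-- The second Arens product on the bidual of a Banach algebra. -/
def arens2 (F G : Dual ℝ (Dual ℝ A)) : Dual ℝ (Dual ℝ A) :=
  arensExt ((ContinuousLinearMap.mul ℝ A).flip) G F

/-- The weak left topological center of `A**`: those `F` such that
`G ↦ F □ G` is weak-*-to-weak continuous. -/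
def weakLeftCenter : Set (Dual ℝ (Dual ℝ A)) :=
  { F | ∀ Φ : Dual ℝ (Dual ℝ (Dual ℝ A)),
      @Continuous _ _ (weakStarTop A) _ fun G => Φ (arens1 A F G) }

/-- The left topological center of `A**`: those `F` such that
`G ↦ F □ G` is weak-*-to-weak-* continuous. -/
def leftCenter : Set (Dual ℝ (Dual ℝ A)) :=
  { F | ∀ f : Dual ℝ A,
      @Continuous _ _ (weakStarTop A) _ fun G => arens1 A F G f }

end Algebra



section AuxEval

open Filter

lemma adjBil_apply {X Y Z : Type*}
    [NormedAddCommGroup X] [NormedSpace ℝ X]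
    [NormedAddCommGroup Y] [NormedSpace ℝ Y]
    [NormedAddCommGroup Z] [NormedSpace ℝ Z]
    (m : X →L[ℝ] Y →L[ℝ] Z) (z' : Dual ℝ Z) (x : X) (y : Y) :
    adjBil m z' x y = z' (m x y) := rfl

lemma dualMapCLM_apply {X Y : Type*}
    [NormedAddCommGroup X] [NormedSpace ℝ X]
    [NormedAddCommGroup Y] [NormedSpace ℝ Y]
    (T : X →L[ℝ] Y) (g : Dual ℝ Y) (x : X) :
    dualMapCLM X Y T g x = g (T x) := rfl

lemma weakStar_eval {E : Type*} [NormedAddCommGroup E] [NormedSpace ℝ E]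
    (Φ : Dual ℝ (Dual ℝ E) →L[ℝ] ℝ)
    (hΦ : @Continuous _ _ (weakStarTop E) _ ⇑Φ) :
    ∃ f : Dual ℝ E, ∀ F, Φ F = F f := by
  have h0 : Filter.Tendsto ⇑Φ (@nhds _ (weakStarTop E) 0) (nhds (0:ℝ)) := by
    have h1 := @Continuous.tendsto _ _ (weakStarTop E) _ _ hΦ 0
    simpa only [map_zero] using h1
  have hball : (⇑Φ) ⁻¹' Metric.ball 0 1 ∈ @nhds _ (weakStarTop E) 0 :=
    h0 (Metric.ball_mem_nhds 0 one_pos)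
  have hnhds : @nhds _ (weakStarTop E) 0
      = ⨅ f : Dual ℝ E, Filter.comap (fun F : Dual ℝ (Dual ℝ E) => F f) (nhds 0) := by
    rw [weakStarTop, _root_.nhds_iInf]
    refine iInf_congr fun f => ?_
    rw [@nhds_induced ℝ _ _ (fun F : Dual ℝ (Dual ℝ E) => F f) 0]
    simp
  rw [hnhds, Filter.mem_iInf] at hball
  obtain ⟨I, hIfin, V, hV, hU⟩ := hball
  have hker : ∀ F : Dual ℝ (Dual ℝ E), (∀ i : I, F i.1 = 0) → Φ F = 0 := by
    intro F hF
    have hmem : ∀ c : ℝ, |c| * |Φ F| < 1 := by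
      intro c
      have : c • F ∈ ⋂ i : I, V i := by
        refine Set.mem_iInter.2 fun i => ?_
        obtain ⟨W, hW, hWV⟩ := hV i
        refine hWV ?_
        have : (c • F) i.1 = 0 := by simp [hF i]
        simpa [Set.mem_preimage, this] using mem_of_mem_nhds hW
      have hmemball : Φ (c • F) ∈ Metric.ball (0:ℝ) 1 := by
        rw [← Set.mem_preimage, hU]; exact this
      have hd : dist (Φ (c • F)) 0 < 1 := Metric.mem_ball.1 hmemball
      rw [map_smul, smul_eq_mul, Real.dist_eq, sub_zero, abs_mul] at hd
      exact hd
    by_contra hne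
    have habs : (0:ℝ) < |Φ F| := abs_pos.2 hne
    have h2 := hmem (2 / |Φ F|)
    rw [abs_of_pos (by positivity), div_mul_cancel₀ 2 (ne_of_gt habs)] at h2
    norm_num at h2
  haveI : Finite I := hIfin.to_subtype
  haveI : Fintype I := hIfin.fintype
  set L : I → (Dual ℝ (Dual ℝ E) →ₗ[ℝ] ℝ) :=
    fun i => (inclusionInDoubleDual ℝ (Dual ℝ E) i.1).toLinearMap with hL
  have hsub : ⨅ i : I, LinearMap.ker (L i) ≤ LinearMap.ker (Φ : Dual ℝ (Dual ℝ E) →ₗ[ℝ] ℝ) := by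
    intro F hF
    rw [Submodule.mem_iInf] at hF
    exact hker F fun i => hF i
  obtain ⟨c, hc⟩ := (Submodule.mem_span_range_iff_exists_fun ℝ).1 (mem_span_of_iInf_ker_le_ker hsub)
  refine ⟨∑ i : I, c i • i.1, fun F => ?_⟩
  have := LinearMap.congr_fun hc F
  simp only [LinearMap.coe_sum, Finset.sum_apply, LinearMap.smul_apply,
    ContinuousLinearMap.coe_coe, hL] at this ⊢
  rw [map_sum]
  simp only [map_smul, smul_eq_mul]
  rw [← this]
  rfl

end AuxEval

set_option maxHeartbeats 2000000 in
/-- if `Z̃ˡ_{A**}(B**) = B**` then the second adjoint of a continuous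
derivation `D : A → B*` is a derivation `D'' : A** → B***` (first Arens product on
`A**`, induced `A**`-bimodule structure on `B***`). -/
theorem stmt11 (A : Type*) [NonUnitalNormedRing A] [NormedSpace ℝ A]
    [IsScalarTower ℝ A A] [SMulCommClass ℝ A A] [CompleteSpace A]
    (B : Type*) [NormedAddCommGroup B] [NormedSpace ℝ B] [CompleteSpace B]
    (l : A →L[ℝ] B →L[ℝ] B) (r : B →L[ℝ] A →L[ℝ] B)
    (hl : ∀ (a b : A) (x : B), l (a * b) x = l a (l b x))
    (hr : ∀ (x : B) (a b : A), r (r x a) b = r x (a * b))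
    (hlr : ∀ (a : A) (x : B) (b : A), r (l a x) b = l a (r x b))
    -- `Z̃ˡ_{A**}(B**) = B**`: for every `b''`, `F ↦ b'' ⋅ F` is weak-*-to-weak continuous
    (hcen : ∀ (b'' : Dual ℝ (Dual ℝ B)) (Φ : Dual ℝ (Dual ℝ (Dual ℝ B))),
      @Continuous _ _ (weakStarTop A) _ fun F => Φ (arensExt r b'' F))
    -- `D : A → B*` is a continuous derivation for the dual module actions
    (D : A →L[ℝ] Dual ℝ B)
    (hD : ∀ a b : A, D (a * b) = (D b).comp (r.flip a) + (D a).comp (l b)) :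
    -- then `D''` is a derivation `A** → B***`
    ∀ F G : Dual ℝ (Dual ℝ A),
      dualMapCLM (Dual ℝ (Dual ℝ B)) (Dual ℝ A) (dualMapCLM A (Dual ℝ B) D) (arens1 A F G) =
        (dualMapCLM (Dual ℝ (Dual ℝ B)) (Dual ℝ A) (dualMapCLM A (Dual ℝ B) D) G).comp
            ((arensExt r).flip F) +
        (dualMapCLM (Dual ℝ (Dual ℝ B)) (Dual ℝ A) (dualMapCLM A (Dual ℝ B) D) F).comp
            (arensExt l G) := by
  intro F G
  set D1 : Dual ℝ (Dual ℝ B) →L[ℝ] Dual ℝ A := dualMapCLM A (Dual ℝ B) D with hD1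
  apply ContinuousLinearMap.ext
  intro b''
  set ι : A →L[ℝ] Dual ℝ (Dual ℝ A) := inclusionInDoubleDual ℝ A with hι
  set ψ : Dual ℝ A := ((G.comp D1).comp ((arensExt r b'').comp ι)) with hψ
  set χ : Dual ℝ A := D1 (arensExt l G b'') with hχ
  have hsplit : adjBil (adjBil (ContinuousLinearMap.mul ℝ A)) G (D1 b'') = ψ + χ := by
    ext a
    have hinner : adjBil (ContinuousLinearMap.mul ℝ A) (D1 b'') a
        = D1 (arensExt r b'' (ι a)) + adjBil (adjBil l) b'' (D a) := by
      ext b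
      have e1 : adjBil (adjBil r) (ι a) (D b) = (D b).comp (r.flip a) := by
        ext x; rfl
      have e2 : adjBil l (D a) b = (D a).comp (l b) := by
        ext x; rfl
      show D1 b'' (a * b)
        = (D1 (arensExt r b'' (ι a)) + adjBil (adjBil l) b'' (D a)) b
      have lhs1 : D1 b'' (a * b) = b'' (D (a * b)) := rfl
      have rhs1 : (D1 (arensExt r b'' (ι a)) + adjBil (adjBil l) b'' (D a)) b
          = b'' (adjBil (adjBil r) (ι a) (D b)) + b'' (adjBil l (D a) b) := rfl
      rw [lhs1, rhs1, e1, e2, hD a b, map_add]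
    show G (adjBil (ContinuousLinearMap.mul ℝ A) (D1 b'') a) = (ψ + χ) a
    rw [hinner, map_add]
    rfl
  have hLHS : dualMapCLM (Dual ℝ (Dual ℝ B)) (Dual ℝ A) D1 (arens1 A F G) b''
      = F (adjBil (adjBil (ContinuousLinearMap.mul ℝ A)) G (D1 b'')) := rfl
  rw [hLHS, hsplit, map_add]
  -- the hard term, via the topological center hypothesis
  set Φ0 : Dual ℝ (Dual ℝ A) →L[ℝ] ℝ := (G.comp D1).comp (arensExt r b'') with hΦ0
  have hcont : @Continuous _ _ (weakStarTop A) _ ⇑Φ0 := hcen b'' (G.comp D1)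
  obtain ⟨f0, hf0⟩ := weakStar_eval Φ0 hcont
  have hψf0 : ψ = f0 := by
    ext a
    have := hf0 (ι a)
    have hl1 : Φ0 (ι a) = ψ a := rfl
    have hl2 : (ι a) f0 = f0 a := rfl
    rw [hl1, hl2] at this
    exact this
  have hterm1 : F ψ = G (D1 (arensExt r b'' F)) := by
    rw [hψf0, ← hf0 F]
    rfl
  have hterm2 : F χ = F (D1 (arensExt l G b'')) := rfl
  rw [hterm1, hterm2]
  rfl

end
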